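/- Let G be a simple connected graph with closed neighborhood ideal N_G in the polynomial ring S over a field K with one variable t_v for each vertex v, and let U, D ⊆ V(G) be sets of vertices such that the colon ideal (N_G : t_U) equals the prime ideal ⟨D⟩ generated by the variables indexed by D, where t_U = ∏_{v∈U} t_v. Then U ∩ D = ∅, and for every w ∈ D there exists a vertex v with N[v] ⊆ U ∪ {w} and N[v] ⊄ U. -/
import Mathlib


open Finset MvPolynomial

noncomputable section
open scoped Classical

variable {V : Type*}

/-- The closed neighborhood of a vertex, as a finite set. -/
def closedNbhd [Fintype V] (G : SimpleGraph V) (v : V) : Finset V :=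
  Finset.univ.filter fun u => u = v ∨ G.Adj v u

/-- The closed neighborhood of a set of vertices. -/
def closedNbhdSet [Fintype V] (G : SimpleGraph V) (A : Finset V) : Finset V :=
  A.biUnion (closedNbhd G)

/-- A dominating set of a graph. -/
def IsDominatingSet [Fintype V] (G : SimpleGraph V) (D : Finset V) : Prop :=
  ∀ v : V, ∃ u ∈ D, v ∈ closedNbhd G u

/-- A minimal dominating set: dominating, and no proper subset dominates. -/
def IsMinimalDominatingSet [Fintype V] (G : SimpleGraph V) (D : Finset V) : Prop :=
  IsDominatingSet G D ∧ ∀ D' ⊂ D, ¬ IsDominatingSet G D'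

/-- The set of external and self-private neighbors of D: the vertices whose
closed neighborhood meets D in exactly one vertex. -/
def privateNbrs [Fintype V] (G : SimpleGraph V) (D : Finset V) : Finset V :=
  Finset.univ.filter fun v => (closedNbhd G v ∩ D).card = 1

/-- The closed neighborhood ideal of a graph, in the polynomial ring over K with
one variable for each vertex. -/
def cnIdeal (K : Type*) [Field K] [Fintype V] (G : SimpleGraph V) :
    Ideal (MvPolynomial V K) :=
  Ideal.span (Set.range fun v => ∏ u ∈ closedNbhd G v, X u)

/-- The ideal generated by the variables indexed by a set of vertices D. -/
def vertexIdeal (K : Type*) [Field K] (D : Finset V) : Ideal (MvPolynomial V K) :=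
  Ideal.span ((fun v => (X v : MvPolynomial V K)) '' ↑D)

/-- The v-number of a graded ideal: the least degree d of a homogeneous polynomial f
such that the colon ideal (I : f) is an associated prime of S/I. -/
def vNumber {K : Type*} [Field K] (I : Ideal (MvPolynomial V K)) : ℕ :=
  sInf {d : ℕ | ∃ f : MvPolynomial V K, f.IsHomogeneous d ∧
    Submodule.colon I (Ideal.span {f}) ∈
      associatedPrimes (MvPolynomial V K) (MvPolynomial V K ⧸ I)}

end

namespace CNAux
open Finset MvPolynomial

variable {V : Type*} [DecidableEq V] {K : Type*} [Field K]

noncomputable def eset (s : Finset V) : V →₀ ℕ := ∑ u ∈ s, Finsupp.single u 1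

lemma eset_apply (s : Finset V) (a : V) : eset s a = if a ∈ s then 1 else 0 := by
  classical
  simp [eset, Finsupp.single_apply, Finset.sum_ite_eq]

lemma prod_X_eq (s : Finset V) :
    ∏ u ∈ s, (X u : MvPolynomial V K) = monomial (eset s) 1 := by
  classical
  induction s using Finset.induction_on with
  | empty => simp [eset]
  | @insert a s h ih =>
      rw [Finset.prod_insert h, ih,
        show eset (insert a s) = Finsupp.single a 1 + eset s from
          Finset.sum_insert h,
        monomial_single_add, pow_one]

lemma cnIdeal_eq [Fintype V] (G : SimpleGraph V) :
    cnIdeal K G = Ideal.span ((fun e => monomial e (1 : K)) ''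
      (Set.range fun v => eset (closedNbhd G v))) := by
  rw [cnIdeal, ← Set.range_comp]
  congr 1
  ext p
  simp [Function.comp, prod_X_eq]

lemma mono_mem_cnIdeal_iff [Fintype V] (G : SimpleGraph V) (e : V →₀ ℕ) :
    (monomial e (1 : K)) ∈ cnIdeal K G ↔ ∃ v, eset (closedNbhd G v) ≤ e := by
  rw [cnIdeal_eq, mem_ideal_span_monomial_image]
  simp [support_monomial]

lemma eset_le_eset {s t : Finset V} (h : s ⊆ t) : eset s ≤ eset t := by
  intro a
  rw [eset_apply, eset_apply]
  by_cases ha : a ∈ s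
  · simp [ha, h ha]
  · simp [ha]

lemma one_notMem_vertexIdeal (D : Finset V) : (1 : MvPolynomial V K) ∉ vertexIdeal K D := by
  intro h1
  have h2 : (1 : MvPolynomial V K) ∈ Ideal.span (X '' (↑D : Set V)) := h1
  have := mem_ideal_span_X_image.mp h2 0 (by simp)
  simp at this

end CNAux

/-- If the colon ideal of the closed neighborhood ideal by the squarefree monomial
supported on U equals the ideal of variables indexed by D, then U ∩ D = ∅, and every
w ∈ D admits a vertex v with N[v] ⊆ U ∪ {w} and N[v] ⊄ U. -/
theorem colon_eq_vertexIdeal_inter_empty {V : Type*} [Fintype V] [DecidableEq V]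
    (K : Type*) [Field K] (G : SimpleGraph V) (hG : G.Connected) (U D : Finset V)
    (h : Submodule.colon (cnIdeal K G) (Ideal.span {∏ v ∈ U, (X v : MvPolynomial V K)}) =
      vertexIdeal K D) :
    U ∩ D = ∅ ∧
      ∀ w ∈ D, ∃ v : V, closedNbhd G v ⊆ U ∪ {w} ∧ ¬ closedNbhd G v ⊆ U := by
  classical
  open CNAux in
  -- no vertex has its closed neighborhood inside U
  have hfA : ¬ ∃ v, closedNbhd G v ⊆ U := by
    rintro ⟨v, hv⟩
    have hmem : (∏ v ∈ U, (X v : MvPolynomial V K)) ∈ cnIdeal K G := by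
      rw [prod_X_eq, mono_mem_cnIdeal_iff]
      exact ⟨v, eset_le_eset hv⟩
    have h1 : (1 : MvPolynomial V K) ∈
        Submodule.colon (cnIdeal K G) (Ideal.span {∏ v ∈ U, (X v : MvPolynomial V K)}) := by
      rw [Submodule.mem_colon]
      intro p hp
      rw [one_smul]
      exact (Ideal.span_singleton_le_iff_mem _).mpr hmem hp
    rw [h] at h1
    exact one_notMem_vertexIdeal D h1
  have key : ∀ w ∈ D, ∃ v : V, closedNbhd G v ⊆ U ∪ {w} ∧ ¬ closedNbhd G v ⊆ U := by
    intro w hw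
    have hXw : (X w : MvPolynomial V K) ∈ vertexIdeal K D :=
      Ideal.subset_span ⟨w, hw, rfl⟩
    rw [← h] at hXw
    have hm : (X w : MvPolynomial V K) * ∏ v ∈ U, X v ∈ cnIdeal K G := by
      have := Submodule.mem_colon.mp hXw (∏ v ∈ U, X v) (Ideal.subset_span rfl)
      simpa [smul_eq_mul] using this
    rw [prod_X_eq, show (X w : MvPolynomial V K) * monomial (eset U) 1
        = monomial (Finsupp.single w 1 + eset U) 1 from by
          rw [monomial_single_add, pow_one]] at hm
    obtain ⟨v, hle⟩ := (mono_mem_cnIdeal_iff G _).mp hm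
    refine ⟨v, ?_, fun hsub => hfA ⟨v, hsub⟩⟩
    intro u hu
    have h2 := hle u
    rw [eset_apply, if_pos hu, Finsupp.add_apply, eset_apply, Finsupp.single_apply] at h2
    rw [Finset.mem_union, Finset.mem_singleton]
    by_contra hcon
    push_neg at hcon
    rw [if_neg hcon.1, if_neg (fun hwu => hcon.2 hwu.symm)] at h2
    simp at h2
  refine ⟨?_, key⟩
  rw [Finset.eq_empty_iff_forall_notMem]
  intro w hw
  rw [Finset.mem_inter] at hw
  obtain ⟨v, hsub, hnsub⟩ := key w hw.2
  refine hnsub (hsub.trans ?_)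
  intro u hu
  rcases Finset.mem_union.mp hu with h1 | h1
  · exact h1
  · rw [Finset.mem_singleton] at h1
    exact h1 ▸ hw.1
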